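/- For every real d > 0, PR(d,0) = 1, and the function γ ↦ PR(d,γ) is differentiable at γ = 0 with derivative equal to -4/((d+2)(d+4)); in particular this derivative is strictly negative. -/

import Mathlib

open Real

/-- The performance ratio of interpolated-NN (interpolation level `γ`) to standard k-NN
in dimension `d`. -/
noncomputable def PR (d γ : ℝ) : ℝ :=
  (1 + γ ^ 2 / (d * (d - 2 * γ))) ^ ((4 : ℝ) / (d + 4)) *
    ((d - γ) ^ 2 / (d + 2 - γ) ^ 2 * (d + 2) ^ 2 / d ^ 2) ^ (d / (d + 4))

/-- For every real `d > 0`, `PR d 0 = 1`, the map `γ ↦ PR d γ` is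
differentiable at `0` with derivative `-4/((d+2)(d+4))`, and this derivative is
strictly negative. -/
theorem PR_eq_one_and_hasDerivAt_zero (d : ℝ) (hd : 0 < d) :
    PR d 0 = 1 ∧
      HasDerivAt (fun γ : ℝ => PR d γ) (-4 / ((d + 2) * (d + 4))) 0 ∧
      -4 / ((d + 2) * (d + 4)) < 0 := by
  have hd0 : d ≠ 0 := ne_of_gt hd
  have hd2 : d + 2 ≠ 0 := by positivity
  have hd4 : d + 4 ≠ 0 := by positivity
  have hB0 : (d - 0) ^ 2 / (d + 2 - 0) ^ 2 * (d + 2) ^ 2 / d ^ 2 = 1 := by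
    field_simp
    ring
  have hPR0 : PR d 0 = 1 := by
    unfold PR
    rw [hB0]
    norm_num
  have hneg : -4 / ((d + 2) * (d + 4)) < 0 :=
    div_neg_of_neg_of_pos (by norm_num) (by positivity)
  refine ⟨hPR0, ?_, hneg⟩
  -- derivative of the first base
  have h1 : HasDerivAt (fun γ : ℝ => γ ^ 2) 0 0 := by
    simpa [Pi.pow_def] using (hasDerivAt_id (0 : ℝ)).pow 2
  have h2 : HasDerivAt (fun γ : ℝ => d * (d - 2 * γ)) (d * (-2)) 0 := by
    have := (((hasDerivAt_id (0 : ℝ)).const_mul 2).const_sub d).const_mul d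
    refine this.congr_deriv ?_
    ring
  have hA : HasDerivAt (fun γ : ℝ => 1 + γ ^ 2 / (d * (d - 2 * γ))) 0 0 := by
    have hden : d * (d - 2 * 0) ≠ 0 := by
      simp [hd0]
    have := (hasDerivAt_const (0 : ℝ) 1).add (h1.div h2 hden)
    simpa [Pi.add_def, Pi.div_def] using this
  -- derivative of the second base
  have hnum : HasDerivAt (fun γ : ℝ => (d - γ) ^ 2) (2 * d * (-1)) 0 := by
    have hf : HasDerivAt (fun γ : ℝ => d - γ) (-1) 0 :=
      (hasDerivAt_id (0 : ℝ)).const_sub d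
    simpa [Pi.pow_def] using hf.pow 2
  have hden2 : HasDerivAt (fun γ : ℝ => (d + 2 - γ) ^ 2) (2 * (d + 2) * (-1)) 0 := by
    have hf : HasDerivAt (fun γ : ℝ => d + 2 - γ) (-1) 0 :=
      (hasDerivAt_id (0 : ℝ)).const_sub (d + 2)
    simpa [Pi.pow_def] using hf.pow 2
  have hBder : HasDerivAt
      (fun γ : ℝ => (d - γ) ^ 2 / (d + 2 - γ) ^ 2 * (d + 2) ^ 2 / d ^ 2)
      (-4 / (d * (d + 2))) 0 := by
    have hden0 : (d + 2 - (0 : ℝ)) ^ 2 ≠ 0 := by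
      simp [pow_eq_zero_iff]
      intro h; nlinarith
    have h := (((hnum.div hden2 hden0).mul_const ((d + 2) ^ 2)).div_const (d ^ 2))
    refine h.congr_deriv ?_
    field_simp
    ring
  -- combine via rpow
  have hA0 : (1 : ℝ) + 0 ^ 2 / (d * (d - 2 * 0)) ≠ 0 := by norm_num
  have hB0' : (d - 0) ^ 2 / (d + 2 - 0) ^ 2 * (d + 2) ^ 2 / d ^ 2 ≠ 0 := by
    rw [hB0]; norm_num
  have hArpow := hA.rpow_const (p := (4 : ℝ) / (d + 4)) (Or.inl hA0)
  have hBrpow := hBder.rpow_const (p := d / (d + 4)) (Or.inl hB0')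
  have h := hArpow.mul hBrpow
  have : HasDerivAt (fun γ : ℝ => PR d γ) (-4 / ((d + 2) * (d + 4))) 0 := by
    refine h.congr_deriv ?_
    simp only [hB0]
    norm_num [Real.one_rpow]
    field_simp
  exact this
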